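/- Let (x, s) ∈ int(K) × int(K) and μ = xᵀs/k. Then ‖w_{xs} − μe‖ ≤ ‖(D^{−T}x) ∘ (Ds) − μe‖ for every D ∈ G, and equality is attained for some D ∈ G; i.e., ‖w_{xs} − μe‖ = min over D ∈ G of ‖(D^{−T}x) ∘ (Ds) − μe‖. -/

import Mathlib

open scoped BigOperators
open Matrix

namespace SOCP

/-- Index type for a block vector with `k` blocks, block `i` having dimension `d i + 1`. -/
abbrev Idx {k : ℕ} (d : Fin k → ℕ) : Type := (i : Fin k) × Fin (d i + 1)

/-- The `i`-th block of a block vector. -/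
def blk {k : ℕ} {d : Fin k → ℕ} (v : Idx d → ℝ) (i : Fin k) : Fin (d i + 1) → ℝ :=
  fun j => v ⟨i, j⟩

/-- Squared Euclidean norm of the tail `u_{2:m}` of a single block. -/
def tailNormSq {m : ℕ} (u : Fin (m + 1) → ℝ) : ℝ := ∑ j : Fin m, u j.succ ^ 2

/-- Euclidean norm of the tail `u_{2:m}` of a single block. -/
noncomputable def tailNorm {m : ℕ} (u : Fin (m + 1) → ℝ) : ℝ := Real.sqrt (tailNormSq u)

/-- Membership in the cone `K` (a direct product of second-order cones). -/
def inK {k : ℕ} {d : Fin k → ℕ} (v : Idx d → ℝ) : Prop :=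
  ∀ i : Fin k, tailNorm (blk v i) ≤ v ⟨i, 0⟩

/-- Membership in the interior of the cone `K`. -/
def inIntK {k : ℕ} {d : Fin k → ℕ} (v : Idx d → ℝ) : Prop :=
  ∀ i : Fin k, tailNorm (blk v i) < v ⟨i, 0⟩

/-- Euclidean inner product of vectors. -/
def dotV {ι : Type*} [Fintype ι] (u v : ι → ℝ) : ℝ := ∑ a, u a * v a

/-- Euclidean norm of a vector. -/
noncomputable def vnorm {ι : Type*} [Fintype ι] (v : ι → ℝ) : ℝ :=
  Real.sqrt (∑ a, v a ^ 2)

/-- Blockwise Jordan product. -/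
def jmul {k : ℕ} {d : Fin k → ℕ} (u v : Idx d → ℝ) : Idx d → ℝ := fun a =>
  if a.2 = 0 then ∑ j, u ⟨a.1, j⟩ * v ⟨a.1, j⟩
  else u ⟨a.1, 0⟩ * v a + v ⟨a.1, 0⟩ * u a

/-- The unit element `e` of the Jordan algebra. -/
def unitE {k : ℕ} {d : Fin k → ℕ} : Idx d → ℝ := fun a => if a.2 = 0 then 1 else 0

/-- `λ_min` of the `i`-th block. -/
noncomputable def lamMin {k : ℕ} {d : Fin k → ℕ} (v : Idx d → ℝ) (i : Fin k) : ℝ :=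
  v ⟨i, 0⟩ - tailNorm (blk v i)

/-- `λ_max` of the `i`-th block. -/
noncomputable def lamMax {k : ℕ} {d : Fin k → ℕ} (v : Idx d → ℝ) (i : Fin k) : ℝ :=
  v ⟨i, 0⟩ + tailNorm (blk v i)

/-- Arrow-head matrix of a single block. -/
def arrowBlk {m : ℕ} (u : Fin (m + 1) → ℝ) : Matrix (Fin (m + 1)) (Fin (m + 1)) ℝ :=
  Matrix.of fun j j' =>
    if j = 0 then u j' else if j' = 0 then u j else if j = j' then u 0 else 0

/-- Arrow-head matrix `mat(v)` (block diagonal). -/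
def matV {k : ℕ} {d : Fin k → ℕ} (v : Idx d → ℝ) : Matrix (Idx d) (Idx d) ℝ :=
  Matrix.blockDiagonal' fun i => arrowBlk (blk v i)

/-- `β_u = sqrt(u_1^2 - ‖u_{2:m}‖^2)` for a single block. -/
noncomputable def betaOf {m : ℕ} (u : Fin (m + 1) → ℝ) : ℝ :=
  Real.sqrt (u 0 ^ 2 - tailNormSq u)

/-- The matrix `T_u` for a single block. -/
noncomputable def Tblk {m : ℕ} (u : Fin (m + 1) → ℝ) :
    Matrix (Fin (m + 1)) (Fin (m + 1)) ℝ :=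
  Matrix.of fun j j' =>
    if j = 0 then u j'
    else if j' = 0 then u j
    else (if j = j' then betaOf u else 0) + u j * u j' / (betaOf u + u 0)

/-- The matrix `T_x` (block diagonal). -/
noncomputable def TV {k : ℕ} {d : Fin k → ℕ} (x : Idx d → ℝ) :
    Matrix (Idx d) (Idx d) ℝ :=
  Matrix.blockDiagonal' fun i => Tblk (blk x i)

/-- `w_{xs} = T_x s`. -/
noncomputable def wxs {k : ℕ} {d : Fin k → ℕ} (x s : Idx d → ℝ) : Idx d → ℝ :=
  (TV x).mulVec s

/-- Central-path coefficient `μ(x,s) = xᵀs/k`. -/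
noncomputable def muV {k : ℕ} {d : Fin k → ℕ} (x s : Idx d → ℝ) : ℝ :=
  dotV x s / (k : ℝ)

/-- Central-path distance `d_2(x,s) = √2 ‖w_{xs} - μ e‖`. -/
noncomputable def d2 {k : ℕ} {d : Fin k → ℕ} (x s : Idx d → ℝ) : ℝ :=
  Real.sqrt 2 * vnorm (wxs x s - muV x s • unitE)

/-- Central-path distance `d_∞(x,s)`. -/
noncomputable def dInf {k : ℕ} {d : Fin k → ℕ} (x s : Idx d → ℝ) : ℝ :=
  ⨆ i : Fin k, max |lamMax (wxs x s) i - muV x s| |lamMin (wxs x s) i - muV x s|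

/-- The matrix `Q = diag(1, -I)` for a single block. -/
def Qblk {m : ℕ} : Matrix (Fin (m + 1)) (Fin (m + 1)) ℝ :=
  Matrix.of fun j j' => if j = j' then (if j = 0 then (1 : ℝ) else -1) else 0

/-- The scaling group `G` of block matrices `Θ G` with `(Gⁱ)ᵀ Qⁱ Gⁱ = Qⁱ`. -/
def scalingGroup {k : ℕ} (d : Fin k → ℕ) : Set (Matrix (Idx d) (Idx d) ℝ) :=
  { D | ∃ (θ : Fin k → ℝ) (G : ∀ i, Matrix (Fin (d i + 1)) (Fin (d i + 1)) ℝ),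
      (∀ i, 0 < θ i) ∧ (∀ i, (G i)ᵀ * Qblk * G i = Qblk) ∧
      D = Matrix.blockDiagonal' fun i => θ i • G i }

/-- Operator 2-norm of a matrix. -/
noncomputable def op2 {m n : Type*} [Fintype m] [Fintype n] [DecidableEq n]
    (M : Matrix m n ℝ) : ℝ :=
  ‖LinearMap.toContinuousLinearMap (Matrix.toEuclideanLin M)‖

/-- `R_{xs} = T_x X⁻¹ S T_x`. -/
noncomputable def Rxs {k : ℕ} {d : Fin k → ℕ} (x s : Idx d → ℝ) :
    Matrix (Idx d) (Idx d) ℝ :=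
  TV x * (matV x)⁻¹ * matV s * TV x

/-- The scaled Newton system of the infeasible IPM (Monteiro–Zhang family). -/
def NewtonSys {k p : ℕ} {d : Fin k → ℕ} (A : Matrix (Fin p) (Idx d) ℝ)
    (Cm : Matrix (Idx d) (Idx d) ℝ) (x : Idx d → ℝ) (y : Fin p → ℝ) (s : Idx d → ℝ)
    (ν : ℝ) (D : Matrix (Idx d) (Idx d) ℝ)
    (dx : Idx d → ℝ) (dy : Fin p → ℝ) (ds : Idx d → ℝ) : Prop :=
  A.mulVec dx = -((1 - ν) • A.mulVec x) ∧
  Aᵀ.mulVec dy + Cm.mulVec dx + ds =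
    -((1 - ν) • (Aᵀ.mulVec y + Cm.mulVec x + s)) ∧
  (matV ((D⁻¹)ᵀ.mulVec x)).mulVec (D.mulVec ds)
      + (matV (D.mulVec s)).mulVec ((D⁻¹)ᵀ.mulVec dx)
    = (ν * muV x s) • unitE - jmul ((D⁻¹)ᵀ.mulVec x) (D.mulVec s)

/-- Central-path neighborhood `N_2(γ)`. -/
def N2 {k : ℕ} (d : Fin k → ℕ) (p : ℕ) (γ : ℝ) :
    Set ((Idx d → ℝ) × (Fin p → ℝ) × (Idx d → ℝ)) :=
  { z | inIntK z.1 ∧ inIntK z.2.2 ∧ d2 z.1 z.2.2 ≤ γ * muV z.1 z.2.2 }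

/-- Central-path neighborhood `N_∞(γ)`. -/
def NInf {k : ℕ} (d : Fin k → ℕ) (p : ℕ) (γ : ℝ) :
    Set ((Idx d → ℝ) × (Fin p → ℝ) × (Idx d → ℝ)) :=
  { z | inIntK z.1 ∧ inIntK z.2.2 ∧ dInf z.1 z.2.2 ≤ γ * muV z.1 z.2.2 }

/-- The matrix `U_u` for a single block: zero first row and column and lower-right block
`(u_1 - β_u) P_u`, with `P_u` the projection onto the complement of the tail of `u`
(zero when the tail vanishes). -/
noncomputable def Ublk {m : ℕ} (u : Fin (m + 1) → ℝ) :
    Matrix (Fin (m + 1)) (Fin (m + 1)) ℝ :=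
  Matrix.of fun j j' =>
    if j = 0 ∨ j' = 0 then 0
    else if tailNormSq u = 0 then 0
    else (u 0 - betaOf u) * ((if j = j' then (1 : ℝ) else 0) - u j * u j' / tailNormSq u)

/-- The block-diagonal matrix `U_x`. -/
noncomputable def UV {k : ℕ} {d : Fin k → ℕ} (x : Idx d → ℝ) :
    Matrix (Idx d) (Idx d) ℝ :=
  Matrix.blockDiagonal' fun i => Ublk (blk x i)

/-- `Γ_p = 2 (γ²/2 + (1-ν)² k)^{1/2} / (1 - 3γ)`. -/
noncomputable def GammaP (γ ν : ℝ) (k : ℕ) : ℝ :=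
  2 * Real.sqrt (γ ^ 2 / 2 + (1 - ν) ^ 2 * k) / (1 - 3 * γ)

/-- `Γ̃ = (4(γ² + δ²)/(1-3γ)²) (1 - δ/√(2k))⁻¹`. -/
noncomputable def GammaTilde (γ δ : ℝ) (k : ℕ) : ℝ :=
  4 * (γ ^ 2 + δ ^ 2) / (1 - 3 * γ) ^ 2 * (1 - δ / Real.sqrt (2 * k))⁻¹


section AuxLemmas

variable {m : ℕ}

lemma tailNormSq_nonneg (u : Fin (m + 1) → ℝ) : 0 ≤ tailNormSq u :=
  Finset.sum_nonneg fun _ _ => sq_nonneg _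

lemma sum_sq_block (u : Fin (m + 1) → ℝ) : ∑ j, u j ^ 2 = u 0 ^ 2 + tailNormSq u := by
  rw [Fin.sum_univ_succ]; rfl

lemma dotV_block (u v : Fin (m + 1) → ℝ) :
    dotV u v = u 0 * v 0 + ∑ j : Fin m, u j.succ * v j.succ := by
  rw [dotV, Fin.sum_univ_succ]

lemma interior_facts (u : Fin (m + 1) → ℝ) (h : tailNorm u < u 0) :
    0 < betaOf u ∧ betaOf u ^ 2 = u 0 ^ 2 - tailNormSq u ∧ 0 < betaOf u + u 0 := by
  have h0 : 0 ≤ tailNorm u := Real.sqrt_nonneg _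
  have hu0 : 0 < u 0 := lt_of_le_of_lt h0 h
  have hts : tailNorm u ^ 2 = tailNormSq u := Real.sq_sqrt (tailNormSq_nonneg u)
  have hpos : 0 < u 0 ^ 2 - tailNormSq u := by nlinarith
  have hb : 0 < betaOf u := Real.sqrt_pos.mpr hpos
  exact ⟨hb, Real.sq_sqrt hpos.le, by linarith⟩

lemma sum_sq_lin (a c : ℝ) (x y : Fin m → ℝ) :
    ∑ j, (a * x j + c * y j) ^ 2
      = a ^ 2 * ∑ j, x j ^ 2 + 2 * a * c * ∑ j, x j * y j + c ^ 2 * ∑ j, y j ^ 2 := by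
  rw [Finset.mul_sum, Finset.mul_sum, Finset.mul_sum, ← Finset.sum_add_distrib,
    ← Finset.sum_add_distrib]
  exact Finset.sum_congr rfl fun j _ => by ring

lemma Tblk_mulVec_zero (u v : Fin (m + 1) → ℝ) : (Tblk u *ᵥ v) 0 = dotV u v := by
  simp [Matrix.mulVec, dotProduct, Tblk, dotV]

lemma Tblk_succ_zero (u : Fin (m + 1) → ℝ) (j : Fin m) : Tblk u j.succ 0 = u j.succ := by
  simp [Tblk, Fin.succ_ne_zero]

lemma Tblk_succ_succ (u : Fin (m + 1) → ℝ) (j l : Fin m) :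
    Tblk u j.succ l.succ
      = (if j = l then betaOf u else 0) + u j.succ * u l.succ / (betaOf u + u 0) := by
  simp [Tblk, Fin.succ_ne_zero, Fin.succ_inj]

lemma Tblk_mulVec_succ (u v : Fin (m + 1) → ℝ) (j : Fin m) :
    (Tblk u *ᵥ v) j.succ
      = betaOf u * v j.succ
        + (v 0 + (∑ l : Fin m, u l.succ * v l.succ) / (betaOf u + u 0)) * u j.succ := by
  show (∑ l, Tblk u j.succ l * v l) = _
  rw [Fin.sum_univ_succ]
  have h2 : ∀ l : Fin m,
      Tblk u j.succ l.succ * v l.succ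
        = (if j = l then betaOf u * v l.succ else 0)
          + (u l.succ * v l.succ) * (u j.succ / (betaOf u + u 0)) := by
    intro l
    rw [Tblk_succ_succ]
    split_ifs with h <;> ring
  rw [Tblk_succ_zero, Finset.sum_congr rfl fun l _ => h2 l, Finset.sum_add_distrib,
    Finset.sum_ite_eq, ← Finset.sum_mul]
  simp only [Finset.mem_univ, if_true]
  ring

lemma Qblk_mulVec (z : Fin (m + 1) → ℝ) (j : Fin (m + 1)) :
    (Qblk *ᵥ z) j = if j = 0 then z 0 else -z j := by
  show (∑ l, Qblk j l * z l) = _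
  have h : ∀ l, Qblk (m := m) j l * z l
      = if j = l then (if j = 0 then z l else -z l) else 0 := by
    intro l
    simp only [Qblk, Matrix.of_apply]
    split_ifs <;> ring
  rw [Finset.sum_congr rfl fun l _ => h l, Finset.sum_ite_eq]
  simp only [Finset.mem_univ, if_true]
  split_ifs with hj
  · subst hj; rfl
  · rfl

lemma qfQ (z : Fin (m + 1) → ℝ) : dotV z (Qblk *ᵥ z) = z 0 ^ 2 - tailNormSq z := by
  rw [dotV_block, Qblk_mulVec]
  simp only [if_pos rfl]
  have : ∀ l : Fin m, z l.succ * (Qblk *ᵥ z) l.succ = -(z l.succ ^ 2) := by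
    intro l
    rw [Qblk_mulVec]
    simp [Fin.succ_ne_zero]
    ring
  rw [Finset.sum_congr rfl fun l _ => this l, Finset.sum_neg_distrib]
  rw [tailNormSq]
  simp
  ring

end AuxLemmas


section AuxLemmas2

variable {m : ℕ}

lemma scalar_w (u0 v0 β r t P S : ℝ) (hP : P = u0 ^ 2 - β ^ 2)
    (ht : t * (β + u0) = v0 * (β + u0) + r) :
    (u0 * v0 + r) ^ 2 + (β ^ 2 * S + 2 * β * t * r + t ^ 2 * P)
      = 2 * (u0 * v0 + r) ^ 2 - (u0 ^ 2 - P) * (v0 ^ 2 - S) := by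
  subst hP
  linear_combination ((u0 - β) * t + v0 * (u0 - β) + r) * ht

lemma wblk_key (u v : Fin (m + 1) → ℝ) (h : tailNorm u < u 0) :
    (Tblk u *ᵥ v) 0 = dotV u v ∧
    ∑ j, (Tblk u *ᵥ v) j ^ 2
      = 2 * dotV u v ^ 2 - (u 0 ^ 2 - tailNormSq u) * (v 0 ^ 2 - tailNormSq v) := by
  obtain ⟨hb, hb2, hc⟩ := interior_facts u h
  refine ⟨Tblk_mulVec_zero u v, ?_⟩
  have hcne : betaOf u + u 0 ≠ 0 := ne_of_gt hc
  set β := betaOf u with hβdef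
  set r := ∑ l : Fin m, u l.succ * v l.succ with hr
  set t := v 0 + r / (β + u 0) with htdef
  have hsucc : ∀ j : Fin m, (Tblk u *ᵥ v) j.succ = β * v j.succ + t * u j.succ := by
    intro j
    rw [Tblk_mulVec_succ]
  have htail : tailNormSq (Tblk u *ᵥ v)
      = β ^ 2 * tailNormSq v + 2 * β * t * r + t ^ 2 * tailNormSq u := by
    rw [tailNormSq]
    rw [Finset.sum_congr rfl fun j _ => by rw [hsucc j]]
    rw [sum_sq_lin β t (fun j => v j.succ) (fun j => u j.succ)]
    have : ∑ j : Fin m, v j.succ * u j.succ = r := by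
      rw [hr]; exact Finset.sum_congr rfl fun l _ => mul_comm _ _
    rw [this]; rfl
  rw [sum_sq_block, htail, Tblk_mulVec_zero, dotV_block, ← hr]
  have hP : tailNormSq u = u 0 ^ 2 - β ^ 2 := by rw [hβdef] at hb2 ⊢; linarith
  have ht : t * (β + u 0) = v 0 * (β + u 0) + r := by
    rw [htdef]; field_simp
  exact scalar_w (u 0) (v 0) β r t (tailNormSq u) (tailNormSq v) hP ht

lemma jmul_block_lower (p q z : Fin (m + 1) → ℝ)
    (hz0 : z 0 = dotV p q)
    (hzs : ∀ j : Fin m, z j.succ = p 0 * q j.succ + q 0 * p j.succ) :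
    2 * dotV p q ^ 2 - (p 0 ^ 2 - tailNormSq p) * (q 0 ^ 2 - tailNormSq q)
      ≤ ∑ j, z j ^ 2 := by
  rw [sum_sq_block, hz0]
  have htail : tailNormSq z
      = p 0 ^ 2 * tailNormSq q + 2 * p 0 * q 0 * (∑ j : Fin m, q j.succ * p j.succ)
        + q 0 ^ 2 * tailNormSq p := by
    rw [tailNormSq]
    rw [Finset.sum_congr rfl fun j _ => by rw [hzs j]]
    rw [sum_sq_lin (p 0) (q 0) (fun j => q j.succ) (fun j => p j.succ)]
    rfl
  rw [htail]
  have hCS := Finset.sum_mul_sq_le_sq_mul_sq Finset.univ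
    (fun j : Fin m => q j.succ) (fun j => p j.succ)
  have hd : dotV p q = p 0 * q 0 + ∑ j : Fin m, q j.succ * p j.succ := by
    rw [dotV_block]
    congr 1
    exact Finset.sum_congr rfl fun l _ => mul_comm _ _
  have h1 : (∑ j : Fin m, q j.succ * p j.succ) ^ 2 ≤ tailNormSq q * tailNormSq p := hCS
  rw [hd]
  nlinarith [h1]

end AuxLemmas2


section AuxLemmas3

variable {m : ℕ}

lemma Qblk_transpose : (Qblk (m := m))ᵀ = Qblk := by
  ext j j'
  by_cases h : j = j'
  · subst h; rfl
  · simp [Qblk, Matrix.transpose_apply, h, Ne.symm h]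

lemma Qblk_mul_Qblk : (Qblk (m := m)) * Qblk = 1 := by
  have hdiag : (Qblk (m := m))
      = Matrix.diagonal (fun j => if j = 0 then (1 : ℝ) else -1) := by
    ext j j'
    by_cases h : j = j'
    · subst h; simp [Qblk, Matrix.diagonal]
    · simp [Qblk, Matrix.diagonal_apply_ne _ h, h]
  rw [hdiag, Matrix.diagonal_mul_diagonal]
  have : (fun j : Fin (m + 1) => (if j = 0 then (1 : ℝ) else -1) * (if j = 0 then 1 else -1))
      = fun _ => 1 := by
    funext j; split_ifs <;> norm_num
  rw [this, Matrix.diagonal_one]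

lemma Tblk_transpose (u : Fin (m + 1) → ℝ) : (Tblk u)ᵀ = Tblk u := by
  ext j j'
  rcases Fin.eq_zero_or_eq_succ j with hj | ⟨a, hj⟩ <;>
    rcases Fin.eq_zero_or_eq_succ j' with hj' | ⟨b, hj'⟩ <;> subst hj <;> subst hj'
  · rfl
  · simp [Matrix.transpose_apply, Tblk, Fin.succ_ne_zero]
  · simp [Matrix.transpose_apply, Tblk, Fin.succ_ne_zero]
  · simp only [Matrix.transpose_apply, Tblk, Matrix.of_apply,
      if_neg (Fin.succ_ne_zero b), if_neg (Fin.succ_ne_zero a), Fin.succ_inj]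
    by_cases hab : a = b
    · subst hab; ring
    · rw [if_neg hab, if_neg (Ne.symm hab)]; ring

lemma triple_entry (u : Fin (m + 1) → ℝ) (j j' : Fin (m + 1)) :
    (Tblk u * Qblk (m := m) * Tblk u) j j'
      = Tblk u j 0 * Tblk u 0 j' - ∑ l : Fin m, Tblk u j l.succ * Tblk u l.succ j' := by
  have hTQ : ∀ b, (Tblk u * Qblk (m := m)) j b
      = if b = 0 then Tblk u j 0 else -(Tblk u j b) := by
    intro b
    rw [Matrix.mul_apply]
    have h : ∀ l, Tblk u j l * Qblk (m := m) l b
        = if l = b then (if b = 0 then Tblk u j b else -(Tblk u j b)) else 0 := by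
      intro l
      simp only [Qblk, Matrix.of_apply]
      by_cases hlb : l = b
      · subst hlb; simp only [if_pos rfl]; split_ifs <;> ring
      · simp [hlb]
    rw [Finset.sum_congr rfl fun l _ => h l, Finset.sum_ite_eq']
    simp only [Finset.mem_univ, if_true]
    split_ifs with hb
    · subst hb; rfl
    · rfl
  rw [Matrix.mul_apply, Finset.sum_congr rfl fun b _ => by rw [hTQ b], Fin.sum_univ_succ]
  have h0 : (if (0 : Fin (m + 1)) = 0 then Tblk u j 0 else -(Tblk u j 0)) * Tblk u 0 j'
      = Tblk u j 0 * Tblk u 0 j' := by rw [if_pos rfl]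
  have hterm : ∀ l : Fin m,
      (if (l.succ : Fin (m + 1)) = 0 then Tblk u j 0 else -(Tblk u j l.succ)) * Tblk u l.succ j'
        = -(Tblk u j l.succ * Tblk u l.succ j') := by
    intro l
    rw [if_neg (Fin.succ_ne_zero l)]
    ring
  rw [h0, Finset.sum_congr rfl fun l _ => hterm l, Finset.sum_neg_distrib]
  ring

lemma Tblk_Q_Tblk (u : Fin (m + 1) → ℝ) (h : tailNorm u < u 0) :
    Tblk u * Qblk (m := m) * Tblk u = betaOf u ^ 2 • Qblk := by
  obtain ⟨hb, hb2, hc⟩ := interior_facts u h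
  have hcne : betaOf u + u 0 ≠ 0 := ne_of_gt hc
  have hP : tailNormSq u = u 0 ^ 2 - betaOf u ^ 2 := by linarith [hb2]
  have hT00 : Tblk u 0 0 = u 0 := rfl
  have hT0s : ∀ l : Fin m, Tblk u 0 l.succ = u l.succ := fun l => rfl
  ext j j'
  rw [triple_entry]
  rcases Fin.eq_zero_or_eq_succ j with hj | ⟨a, hj⟩ <;>
    rcases Fin.eq_zero_or_eq_succ j' with hj' | ⟨b, hj'⟩ <;> subst hj <;> subst hj'
  · -- (0,0)
    rw [hT00]
    rw [Finset.sum_congr rfl fun l _ => by rw [hT0s l, Tblk_succ_zero]]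
    have hsum : ∑ l : Fin m, u l.succ * u l.succ = tailNormSq u := by
      rw [tailNormSq]; exact Finset.sum_congr rfl fun l _ => (sq (u l.succ)).symm
    rw [hsum]
    have hq : (betaOf u ^ 2 • Qblk (m := m)) 0 0 = betaOf u ^ 2 := by
      simp [Qblk, Matrix.smul_apply]
    rw [hq]
    linarith [hb2]
  · -- (0, succ b)
    rw [hT00, hT0s b]
    rw [Finset.sum_congr rfl fun l _ => by rw [hT0s l, Tblk_succ_succ]]
    have hsum : ∑ l : Fin m,
        u l.succ * ((if l = b then betaOf u else 0) + u l.succ * u b.succ / (betaOf u + u 0))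
        = betaOf u * u b.succ + tailNormSq u * (u b.succ / (betaOf u + u 0)) := by
      have hterm : ∀ l : Fin m,
          u l.succ * ((if l = b then betaOf u else 0) + u l.succ * u b.succ / (betaOf u + u 0))
            = (if l = b then betaOf u * u l.succ else 0)
              + (u l.succ ^ 2) * (u b.succ / (betaOf u + u 0)) := by
        intro l; split_ifs <;> ring
      rw [Finset.sum_congr rfl fun l _ => hterm l, Finset.sum_add_distrib,
        Finset.sum_ite_eq', ← Finset.sum_mul, ← tailNormSq]
      simp only [Finset.mem_univ, if_true]
    rw [hsum]
    have hq : (betaOf u ^ 2 • Qblk (m := m)) 0 b.succ = 0 := by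
      simp [Qblk, Matrix.smul_apply, (Fin.succ_ne_zero b).symm]
    rw [hq, hP]
    field_simp
    ring
  · -- (succ a, 0)
    rw [hT00, Tblk_succ_zero u a]
    rw [Finset.sum_congr rfl fun l _ => by rw [Tblk_succ_succ, Tblk_succ_zero]]
    have hsum : ∑ l : Fin m,
        ((if a = l then betaOf u else 0) + u a.succ * u l.succ / (betaOf u + u 0)) * u l.succ
        = betaOf u * u a.succ + tailNormSq u * (u a.succ / (betaOf u + u 0)) := by
      have hterm : ∀ l : Fin m,
          ((if a = l then betaOf u else 0) + u a.succ * u l.succ / (betaOf u + u 0)) * u l.succ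
            = (if a = l then betaOf u * u l.succ else 0)
              + (u l.succ ^ 2) * (u a.succ / (betaOf u + u 0)) := by
        intro l; split_ifs <;> ring
      rw [Finset.sum_congr rfl fun l _ => hterm l, Finset.sum_add_distrib,
        Finset.sum_ite_eq, ← Finset.sum_mul, ← tailNormSq]
      simp only [Finset.mem_univ, if_true]
    rw [hsum]
    have hq : (betaOf u ^ 2 • Qblk (m := m)) a.succ 0 = 0 := by
      simp [Qblk, Matrix.smul_apply, Fin.succ_ne_zero]
    rw [hq, hP]
    field_simp
    ring
  · -- (succ a, succ b)
    rw [Tblk_succ_zero u a, hT0s b]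
    rw [Finset.sum_congr rfl fun l _ => by rw [Tblk_succ_succ, Tblk_succ_succ]]
    have hsum : ∑ l : Fin m,
        ((if a = l then betaOf u else 0) + u a.succ * u l.succ / (betaOf u + u 0))
          * ((if l = b then betaOf u else 0) + u l.succ * u b.succ / (betaOf u + u 0))
        = (if a = b then betaOf u * betaOf u else 0)
          + betaOf u * (u a.succ * u b.succ / (betaOf u + u 0))
          + betaOf u * (u a.succ * u b.succ / (betaOf u + u 0))
          + tailNormSq u * (u a.succ * u b.succ / (betaOf u + u 0) / (betaOf u + u 0)) := by
      have hterm : ∀ l : Fin m,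
          ((if a = l then betaOf u else 0) + u a.succ * u l.succ / (betaOf u + u 0))
            * ((if l = b then betaOf u else 0) + u l.succ * u b.succ / (betaOf u + u 0))
          = ((if a = l then (if l = b then betaOf u * betaOf u else 0) else 0)
            + (if a = l then betaOf u * (u l.succ * u b.succ / (betaOf u + u 0)) else 0))
            + ((if l = b then betaOf u * (u a.succ * u l.succ / (betaOf u + u 0)) else 0)
            + (u l.succ ^ 2) * (u a.succ * u b.succ / (betaOf u + u 0) / (betaOf u + u 0))) := by
        intro l; split_ifs <;> ring
      rw [Finset.sum_congr rfl fun l _ => hterm l, Finset.sum_add_distrib,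
        Finset.sum_add_distrib, Finset.sum_add_distrib, Finset.sum_ite_eq, Finset.sum_ite_eq,
        Finset.sum_ite_eq', ← Finset.sum_mul, ← tailNormSq]
      simp only [Finset.mem_univ, if_true]
      by_cases hab : a = b
      · subst hab; simp only [if_pos rfl]; ring
      · simp only [if_neg hab]; ring
    rw [hsum]
    have hq : (betaOf u ^ 2 • Qblk (m := m)) a.succ b.succ
        = if a = b then -(betaOf u ^ 2) else 0 := by
      by_cases hab : a = b
      · subst hab; simp [Qblk, Matrix.smul_apply, Fin.succ_ne_zero]
      · have hne : (a.succ : Fin (m + 1)) ≠ b.succ := by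
          simpa [Fin.succ_inj] using hab
        simp [Qblk, Matrix.smul_apply, hne, hab]
    rw [hq]
    by_cases hab : a = b <;> simp only [hab, if_true, if_false] <;>
      · rw [hP]; field_simp; ring

lemma Tblk_mulVec_Q (u : Fin (m + 1) → ℝ) (h : tailNorm u < u 0) :
    Tblk u *ᵥ (Qblk *ᵥ u) = betaOf u ^ 2 • (fun j => if j = 0 then (1 : ℝ) else 0) := by
  obtain ⟨hb, hb2, hc⟩ := interior_facts u h
  have hcne : betaOf u + u 0 ≠ 0 := ne_of_gt hc
  have hP : tailNormSq u = u 0 ^ 2 - betaOf u ^ 2 := by linarith [hb2]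
  funext j
  rcases Fin.eq_zero_or_eq_succ j with hj | ⟨a, hj⟩ <;> subst hj
  · rw [Tblk_mulVec_zero, qfQ]
    have hrhs : (betaOf u ^ 2 • fun j : Fin (m + 1) => if j = 0 then (1 : ℝ) else 0) 0
        = betaOf u ^ 2 := by simp
    rw [hrhs]
    linarith [hb2]
  · rw [Tblk_mulVec_succ]
    have h1 : (Qblk *ᵥ u) a.succ = -u a.succ := by
      rw [Qblk_mulVec, if_neg (Fin.succ_ne_zero a)]
    have h2 : (Qblk *ᵥ u) 0 = u 0 := by rw [Qblk_mulVec, if_pos rfl]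
    have hterm : ∀ l : Fin m, u l.succ * (Qblk *ᵥ u) l.succ = -(u l.succ ^ 2) := by
      intro l
      rw [Qblk_mulVec, if_neg (Fin.succ_ne_zero l)]
      ring
    have h3 : ∑ l : Fin m, u l.succ * (Qblk *ᵥ u) l.succ = -tailNormSq u := by
      rw [Finset.sum_congr rfl fun l _ => hterm l, Finset.sum_neg_distrib, tailNormSq]
    rw [h1, h2, h3]
    have hrhs : (betaOf u ^ 2 • fun j : Fin (m + 1) => if j = 0 then (1 : ℝ) else 0) a.succ
        = 0 := by simp [Fin.succ_ne_zero]
    rw [hrhs, hP]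
    field_simp
    ring

end AuxLemmas3



section AuxLemmas4

variable {k : ℕ} {d : Fin k → ℕ}

lemma dotV_eq_dot {ι : Type*} [Fintype ι] (u v : ι → ℝ) : dotV u v = u ⬝ᵥ v := rfl

lemma dot_mulVec_mulVec {ι : Type*} [Fintype ι] (M N : Matrix ι ι ℝ) (x y : ι → ℝ) :
    dotV (M *ᵥ x) (N *ᵥ y) = dotV x ((Mᵀ * N) *ᵥ y) := by
  rw [dotV_eq_dot, dotV_eq_dot, ← Matrix.mulVec_mulVec]
  rw [dotProduct_comm, Matrix.dotProduct_mulVec, ← Matrix.mulVec_transpose,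
    dotProduct_comm]

lemma blockDiagonal'_mulVec_blk
    (M : ∀ i, Matrix (Fin (d i + 1)) (Fin (d i + 1)) ℝ) (v : Idx d → ℝ) (i : Fin k)
    (j : Fin (d i + 1)) :
    (Matrix.blockDiagonal' M *ᵥ v) ⟨i, j⟩ = (M i *ᵥ blk v i) j := by
  show (∑ a : Idx d, Matrix.blockDiagonal' M ⟨i, j⟩ a * v a)
    = ∑ j' : Fin (d i + 1), M i j j' * blk v i j'
  rw [← Finset.univ_sigma_univ, Finset.sum_sigma]
  rw [Finset.sum_eq_single i]
  · exact Finset.sum_congr rfl fun j' _ => by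
      rw [Matrix.blockDiagonal'_apply_eq]; rfl
  · intro i' _ hne
    apply Finset.sum_eq_zero
    intro j' _
    rw [Matrix.blockDiagonal'_apply_ne _ _ _ (Ne.symm hne), zero_mul]
  · intro hmem
    exact absurd (Finset.mem_univ i) hmem

lemma blk_blockDiagonal'_mulVec
    (M : ∀ i, Matrix (Fin (d i + 1)) (Fin (d i + 1)) ℝ) (v : Idx d → ℝ) (i : Fin k) :
    blk (Matrix.blockDiagonal' M *ᵥ v) i = M i *ᵥ blk v i :=
  funext fun j => blockDiagonal'_mulVec_blk M v i j

lemma F_split (z : Idx d → ℝ) (μ : ℝ) :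
    ∑ a : Idx d, (z a - μ * unitE a) ^ 2
      = ∑ i, ((∑ j, blk z i j ^ 2) - 2 * μ * z ⟨i, 0⟩ + μ ^ 2) := by
  rw [← Finset.univ_sigma_univ, Finset.sum_sigma]
  refine Finset.sum_congr rfl fun i _ => ?_
  rw [Fin.sum_univ_succ, sum_sq_block]
  have h0 : unitE (⟨i, 0⟩ : Idx d) = 1 := rfl
  have hs : ∀ j : Fin (d i), unitE (⟨i, j.succ⟩ : Idx d) = 0 := by
    intro j
    simp [unitE, Fin.succ_ne_zero]
  rw [h0]
  rw [Finset.sum_congr rfl fun j (_ : j ∈ Finset.univ) => by rw [hs j, mul_zero, sub_zero]]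
  have hts : tailNormSq (blk z i) = ∑ j : Fin (d i), z ⟨i, j.succ⟩ ^ 2 := rfl
  have hb0 : blk z i 0 = z ⟨i, 0⟩ := rfl
  rw [hts, hb0]
  ring

lemma jmul_blk_zero (p q : Idx d → ℝ) (i : Fin k) :
    jmul p q ⟨i, 0⟩ = dotV (blk p i) (blk q i) := by
  rw [jmul]
  simp only [if_pos rfl]
  rfl

lemma jmul_blk_succ (p q : Idx d → ℝ) (i : Fin k) (j : Fin (d i)) :
    jmul p q ⟨i, j.succ⟩ = p ⟨i, 0⟩ * q ⟨i, j.succ⟩ + q ⟨i, 0⟩ * p ⟨i, j.succ⟩ := by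
  rw [jmul]
  simp only [if_neg (Fin.succ_ne_zero j)]

lemma jmul_unitE (w : Idx d → ℝ) : jmul unitE w = w := by
  funext a
  obtain ⟨i, j⟩ := a
  rcases Fin.eq_zero_or_eq_succ j with hj | ⟨b, hj⟩ <;> subst hj
  · rw [jmul_blk_zero, dotV_block]
    have h0 : blk (unitE : Idx d → ℝ) i 0 = 1 := rfl
    have hs : ∀ l : Fin (d i), blk (unitE : Idx d → ℝ) i l.succ = 0 := by
      intro l
      simp [blk, unitE, Fin.succ_ne_zero]
    rw [h0, Finset.sum_congr rfl fun l (_ : l ∈ Finset.univ) => by rw [hs l, zero_mul]]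
    simp
    rfl
  · rw [jmul_blk_succ]
    have h0 : (unitE : Idx d → ℝ) ⟨i, 0⟩ = 1 := rfl
    have hs : (unitE : Idx d → ℝ) ⟨i, b.succ⟩ = 0 := by
      simp [unitE, Fin.succ_ne_zero]
    rw [h0, hs, one_mul, mul_zero, add_zero]

lemma scaled_block_props {m : ℕ} (θ : ℝ) (hθ : 0 < θ)
    (G : Matrix (Fin (m + 1)) (Fin (m + 1)) ℝ)
    (hG : Gᵀ * Qblk * G = Qblk) (xb sb : Fin (m + 1) → ℝ) :
    dotV ((θ⁻¹ • (Qblk * G * Qblk)) *ᵥ xb) ((θ • G) *ᵥ sb) = dotV xb sb ∧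
    (((θ⁻¹ • (Qblk * G * Qblk)) *ᵥ xb) 0 ^ 2 - tailNormSq ((θ⁻¹ • (Qblk * G * Qblk)) *ᵥ xb))
        * (((θ • G) *ᵥ sb) 0 ^ 2 - tailNormSq ((θ • G) *ᵥ sb))
      = (xb 0 ^ 2 - tailNormSq xb) * (sb 0 ^ 2 - tailNormSq sb) := by
  have hθne : θ ≠ 0 := ne_of_gt hθ
  have hQQ : (Qblk (m := m)) * Qblk = 1 := Qblk_mul_Qblk
  have hQ2X : ∀ X : Matrix (Fin (m + 1)) (Fin (m + 1)) ℝ, Qblk * (Qblk * X) = X := by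
    intro X; rw [← Matrix.mul_assoc, hQQ, Matrix.one_mul]
  have hG' : Gᵀ * (Qblk * G) = Qblk := by rw [← Matrix.mul_assoc, hG]
  have hGQGX : ∀ X : Matrix (Fin (m + 1)) (Fin (m + 1)) ℝ,
      Gᵀ * (Qblk * (G * X)) = Qblk * X := by
    intro X
    calc Gᵀ * (Qblk * (G * X)) = Gᵀ * Qblk * G * X := by simp only [Matrix.mul_assoc]
      _ = Qblk * X := by rw [hG]
  have hMt : (θ⁻¹ • (Qblk (m := m) * G * Qblk))ᵀ = θ⁻¹ • (Qblk * Gᵀ * Qblk) := by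
    rw [Matrix.transpose_smul, Matrix.transpose_mul, Matrix.transpose_mul,
      Qblk_transpose, Matrix.mul_assoc]
  constructor
  · rw [dot_mulVec_mulVec, hMt]
    have hMN : (θ⁻¹ • (Qblk (m := m) * Gᵀ * Qblk)) * (θ • G) = 1 := by
      rw [Matrix.smul_mul, Matrix.mul_smul, smul_smul, inv_mul_cancel₀ hθne, one_smul]
      simp only [Matrix.mul_assoc]
      simp only [hG', hQQ]
    rw [hMN, Matrix.one_mulVec]
  · have hdet1 : dotV ((θ⁻¹ • (Qblk (m := m) * G * Qblk)) *ᵥ xb)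
        (Qblk *ᵥ ((θ⁻¹ • (Qblk * G * Qblk)) *ᵥ xb))
        = (θ ^ 2)⁻¹ * dotV xb (Qblk *ᵥ xb) := by
      rw [dot_mulVec_mulVec, hMt, Matrix.mulVec_mulVec]
      have hMQM : θ⁻¹ • (Qblk (m := m) * Gᵀ * Qblk) * Qblk * (θ⁻¹ • (Qblk * G * Qblk))
          = (θ ^ 2)⁻¹ • Qblk := by
        rw [Matrix.smul_mul, Matrix.smul_mul, Matrix.mul_smul, smul_smul]
        have hcoef : θ⁻¹ * θ⁻¹ = (θ ^ 2)⁻¹ := by rw [sq, mul_inv]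
        rw [hcoef]
        congr 1
        simp only [Matrix.mul_assoc]
        simp only [hQ2X, hGQGX, hQQ, Matrix.mul_one]
      rw [hMQM, Matrix.smul_mulVec, dotV_eq_dot, dotProduct_smul,
        smul_eq_mul, dotV_eq_dot]
    have hdet2 : dotV ((θ • G) *ᵥ sb) (Qblk *ᵥ ((θ • G) *ᵥ sb))
        = θ ^ 2 * dotV sb (Qblk *ᵥ sb) := by
      rw [dot_mulVec_mulVec, Matrix.mulVec_mulVec]
      have hNQN : (θ • G)ᵀ * Qblk * (θ • G) = θ ^ 2 • Qblk := by
        rw [Matrix.transpose_smul, Matrix.smul_mul, Matrix.smul_mul, Matrix.mul_smul,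
          smul_smul, ← sq, hG]
      rw [hNQN, Matrix.smul_mulVec, dotV_eq_dot, dotProduct_smul,
        smul_eq_mul, dotV_eq_dot]
    rw [← qfQ, ← qfQ, hdet1, hdet2, ← qfQ xb, ← qfQ sb]
    field_simp

end AuxLemmas4


section AuxLemmas5

variable {k : ℕ} {d : Fin k → ℕ}

lemma Qblk_mulVec_e {m : ℕ} :
    (Qblk (m := m)) *ᵥ (fun j => if j = 0 then (1 : ℝ) else 0)
      = fun j => if j = 0 then (1 : ℝ) else 0 := by
  funext j
  rw [Qblk_mulVec]
  by_cases h : j = 0 <;> simp [h]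

lemma blockDiagonal'_congr (M N : ∀ i, Matrix (Fin (d i + 1)) (Fin (d i + 1)) ℝ)
    (h : ∀ i, M i = N i) : Matrix.blockDiagonal' M = Matrix.blockDiagonal' N :=
  congrArg Matrix.blockDiagonal' (funext h)

lemma vnorm_sub_smul (z : Idx d → ℝ) (μ : ℝ) :
    vnorm (z - μ • unitE) = Real.sqrt (∑ a, (z a - μ * unitE a) ^ 2) := rfl

end AuxLemmas5

/-- Lemma 9: `‖w_{xs} - μe‖` is the minimum of `‖(D⁻ᵀx) ∘ (Ds) - μe‖` over the scaling
group. -/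
theorem d2_min_over_scalings {k : ℕ} {d : Fin k → ℕ} (hk : 0 < k)
    (x s : Idx d → ℝ) (hx : inIntK x) (hs : inIntK s) :
    (∀ D ∈ scalingGroup d,
      vnorm (wxs x s - muV x s • unitE)
        ≤ vnorm (jmul ((D⁻¹)ᵀ.mulVec x) (D.mulVec s) - muV x s • unitE)) ∧
    (∃ D ∈ scalingGroup d,
      vnorm (wxs x s - muV x s • unitE)
        = vnorm (jmul ((D⁻¹)ᵀ.mulVec x) (D.mulVec s) - muV x s • unitE)) := by
  constructor
  · rintro D ⟨θ, G, hθ, hG, rfl⟩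
    have hθne : ∀ i, θ i ≠ 0 := fun i => ne_of_gt (hθ i)
    have hG' : ∀ i, (G i)ᵀ * (Qblk * G i) = Qblk := by
      intro i; rw [← Matrix.mul_assoc, hG i]
    have hGinv : ∀ i, (θ i • G i) * ((θ i)⁻¹ • (Qblk * (G i)ᵀ * Qblk)) = 1 := by
      intro i
      have h1 : ((Qblk (m := d i)) * (G i)ᵀ * Qblk) * G i = 1 := by
        calc ((Qblk (m := d i)) * (G i)ᵀ * Qblk) * G i
            = Qblk * ((G i)ᵀ * (Qblk * G i)) := by simp only [Matrix.mul_assoc]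
          _ = Qblk * Qblk := by rw [hG' i]
          _ = 1 := Qblk_mul_Qblk
      have h2 : G i * ((Qblk (m := d i)) * (G i)ᵀ * Qblk) = 1 :=
        mul_eq_one_comm.mpr h1
      rw [Matrix.smul_mul, Matrix.mul_smul, smul_smul, mul_inv_cancel₀ (hθne i), one_smul,
        h2]
    have hDinv : (Matrix.blockDiagonal' fun i => θ i • G i)⁻¹
        = Matrix.blockDiagonal' fun i => (θ i)⁻¹ • (Qblk * (G i)ᵀ * Qblk) := by
      apply Matrix.inv_eq_right_inv
      rw [← Matrix.blockDiagonal'_mul]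
      have heq : (fun i => (θ i • G i) * ((θ i)⁻¹ • (Qblk * (G i)ᵀ * Qblk)))
          = fun i => (1 : Matrix (Fin (d i + 1)) (Fin (d i + 1)) ℝ) := funext hGinv
      rw [heq]
      exact Matrix.blockDiagonal'_one
    have hDinvT : ((Matrix.blockDiagonal' fun i => θ i • G i)⁻¹)ᵀ
        = Matrix.blockDiagonal' fun i => (θ i)⁻¹ • (Qblk * G i * Qblk) := by
      rw [hDinv, Matrix.blockDiagonal'_transpose]
      refine blockDiagonal'_congr _ _ fun i => ?_
      rw [Matrix.transpose_smul, Matrix.transpose_mul, Matrix.transpose_mul,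
        Qblk_transpose, Matrix.transpose_transpose, ← Matrix.mul_assoc]
    have hp : ∀ i, blk (((Matrix.blockDiagonal' fun i => θ i • G i)⁻¹)ᵀ.mulVec x) i
        = ((θ i)⁻¹ • (Qblk * G i * Qblk)) *ᵥ blk x i := by
      intro i
      rw [hDinvT]
      exact blk_blockDiagonal'_mulVec _ x i
    have hq : ∀ i, blk ((Matrix.blockDiagonal' fun i => θ i • G i).mulVec s) i
        = (θ i • G i) *ᵥ blk s i := fun i => blk_blockDiagonal'_mulVec _ s i
    have hw : ∀ i, blk (wxs x s) i = Tblk (blk x i) *ᵥ blk s i := by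
      intro i
      rw [wxs, TV]
      exact blk_blockDiagonal'_mulVec _ s i
    rw [vnorm_sub_smul, vnorm_sub_smul]
    apply Real.sqrt_le_sqrt
    rw [F_split, F_split]
    apply Finset.sum_le_sum
    intro i _
    obtain ⟨hdot, hdet⟩ := scaled_block_props (θ i) (hθ i) (G i) (hG i) (blk x i) (blk s i)
    obtain ⟨hw0, hwsum⟩ := wblk_key (blk x i) (blk s i) (hx i)
    have hA : ∑ j, blk (wxs x s) i j ^ 2
        = 2 * dotV (blk x i) (blk s i) ^ 2
          - (blk x i 0 ^ 2 - tailNormSq (blk x i))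
            * (blk s i 0 ^ 2 - tailNormSq (blk s i)) := by
      rw [hw i]
      exact hwsum
    have hB : wxs x s ⟨i, 0⟩ = dotV (blk x i) (blk s i) := by
      have h0 : wxs x s ⟨i, 0⟩ = blk (wxs x s) i 0 := rfl
      rw [h0, hw i]
      exact hw0
    have hD : 2 * dotV (blk (((Matrix.blockDiagonal' fun i => θ i • G i)⁻¹)ᵀ.mulVec x) i)
          (blk ((Matrix.blockDiagonal' fun i => θ i • G i).mulVec s) i) ^ 2
        - (blk (((Matrix.blockDiagonal' fun i => θ i • G i)⁻¹)ᵀ.mulVec x) i 0 ^ 2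
            - tailNormSq (blk (((Matrix.blockDiagonal' fun i => θ i • G i)⁻¹)ᵀ.mulVec x) i))
          * (blk ((Matrix.blockDiagonal' fun i => θ i • G i).mulVec s) i 0 ^ 2
            - tailNormSq (blk ((Matrix.blockDiagonal' fun i => θ i • G i).mulVec s) i))
        ≤ ∑ j, blk (jmul (((Matrix.blockDiagonal' fun i => θ i • G i)⁻¹)ᵀ.mulVec x)
            ((Matrix.blockDiagonal' fun i => θ i • G i).mulVec s)) i j ^ 2 :=
      jmul_block_lower _ _ _ (jmul_blk_zero _ _ i) (fun j => jmul_blk_succ _ _ i j)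
    rw [hp i, hq i, hdot, hdet] at hD
    have hC : jmul (((Matrix.blockDiagonal' fun i => θ i • G i)⁻¹)ᵀ.mulVec x)
        ((Matrix.blockDiagonal' fun i => θ i • G i).mulVec s) ⟨i, 0⟩
        = dotV (blk x i) (blk s i) := by
      rw [jmul_blk_zero, hp i, hq i]
      exact hdot
    rw [hB, hC, hA]
    linarith [hD]
  · have hmem : TV x ∈ scalingGroup d := by
      refine ⟨fun i => betaOf (blk x i), fun i => (betaOf (blk x i))⁻¹ • Tblk (blk x i),
        fun i => (interior_facts _ (hx i)).1, ?_, ?_⟩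
      · intro i
        have hb : 0 < betaOf (blk x i) := (interior_facts _ (hx i)).1
        have hbne : betaOf (blk x i) ≠ 0 := ne_of_gt hb
        rw [Matrix.transpose_smul, Tblk_transpose, Matrix.smul_mul, Matrix.smul_mul,
          Matrix.mul_smul, smul_smul, Tblk_Q_Tblk _ (hx i), smul_smul]
        have hone : (betaOf (blk x i))⁻¹ * (betaOf (blk x i))⁻¹ * betaOf (blk x i) ^ 2
            = 1 := by
          field_simp
        rw [hone, one_smul]
      · rw [TV]
        refine blockDiagonal'_congr _ _ fun i => ?_
        have hbne : betaOf (blk x i) ≠ 0 := ne_of_gt (interior_facts _ (hx i)).1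
        rw [smul_smul, mul_inv_cancel₀ hbne, one_smul]
    refine ⟨TV x, hmem, ?_⟩
    have hinv : (TV x)⁻¹ = Matrix.blockDiagonal'
        fun i => (betaOf (blk x i) ^ 2)⁻¹ • (Qblk * Tblk (blk x i) * Qblk) := by
      apply Matrix.inv_eq_right_inv
      rw [TV, ← Matrix.blockDiagonal'_mul]
      have hone : ∀ i, Tblk (blk x i)
          * ((betaOf (blk x i) ^ 2)⁻¹ • (Qblk * Tblk (blk x i) * Qblk)) = 1 := by
        intro i
        have hb : 0 < betaOf (blk x i) := (interior_facts _ (hx i)).1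
        have hb2ne : betaOf (blk x i) ^ 2 ≠ 0 := pow_ne_zero 2 (ne_of_gt hb)
        rw [Matrix.mul_smul]
        have hTQTQ : Tblk (blk x i) * (Qblk * Tblk (blk x i) * Qblk)
            = betaOf (blk x i) ^ 2 • (1 : Matrix (Fin (d i + 1)) (Fin (d i + 1)) ℝ) := by
          calc Tblk (blk x i) * (Qblk * Tblk (blk x i) * Qblk)
              = Tblk (blk x i) * Qblk * Tblk (blk x i) * Qblk := by
                simp only [Matrix.mul_assoc]
            _ = (betaOf (blk x i) ^ 2 • Qblk) * Qblk := by rw [Tblk_Q_Tblk _ (hx i)]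
            _ = betaOf (blk x i) ^ 2 • (Qblk * Qblk) := by rw [Matrix.smul_mul]
            _ = betaOf (blk x i) ^ 2 • 1 := by rw [Qblk_mul_Qblk]
        rw [hTQTQ, smul_smul, inv_mul_cancel₀ hb2ne, one_smul]
      have heq : (fun i => Tblk (blk x i)
          * ((betaOf (blk x i) ^ 2)⁻¹ • (Qblk * Tblk (blk x i) * Qblk)))
          = fun i => (1 : Matrix (Fin (d i + 1)) (Fin (d i + 1)) ℝ) := funext hone
      rw [heq]
      exact Matrix.blockDiagonal'_one
    have hinvT : ((TV x)⁻¹)ᵀ = (TV x)⁻¹ := by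
      rw [hinv, Matrix.blockDiagonal'_transpose]
      refine blockDiagonal'_congr _ _ fun i => ?_
      rw [Matrix.transpose_smul, Matrix.transpose_mul, Matrix.transpose_mul,
        Qblk_transpose, Tblk_transpose, ← Matrix.mul_assoc]
    have hxe : ((TV x)⁻¹)ᵀ.mulVec x = unitE := by
      rw [hinvT, hinv]
      funext a
      obtain ⟨i, j⟩ := a
      rw [blockDiagonal'_mulVec_blk]
      have hb : 0 < betaOf (blk x i) := (interior_facts _ (hx i)).1
      have hb2ne : betaOf (blk x i) ^ 2 ≠ 0 := pow_ne_zero 2 (ne_of_gt hb)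
      have hchain : ((betaOf (blk x i) ^ 2)⁻¹ • (Qblk * Tblk (blk x i) * Qblk)) *ᵥ blk x i
          = fun j => if j = 0 then (1 : ℝ) else 0 := by
        rw [Matrix.smul_mulVec]
        have h1 : ((Qblk (m := d i)) * Tblk (blk x i) * Qblk) *ᵥ blk x i
            = Qblk *ᵥ (Tblk (blk x i) *ᵥ (Qblk *ᵥ blk x i)) := by
          rw [Matrix.mulVec_mulVec, Matrix.mulVec_mulVec]
        rw [h1, Tblk_mulVec_Q _ (hx i), Matrix.mulVec_smul, Qblk_mulVec_e, smul_smul,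
          inv_mul_cancel₀ hb2ne, one_smul]
      rw [hchain]
      rfl
    rw [hxe, jmul_unitE]
    rfl
end SOCP
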